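/- For every integer k ≥ 0 and all Z-LMMCs (𝒳, ℓ_X) and (𝒴, ℓ_Y): d_WL^(k)((𝒳,ℓ_X),(𝒴,ℓ_Y)) = inf over all k-step couplings γ^(k) ∈ 𝒞^(k)(μ_X, μ_Y) of Σ_{(x,y) ∈ X×Y} d_Z(ℓ_X(x), ℓ_Y(y)) γ^(k)(x,y). -/

import Mathlib

open scoped BigOperators NNReal

namespace WLGW

variable {X Y W : Type*}

/-- A probability mass function on a finite type. -/
def IsPMF [Fintype X] (p : X → ℝ) : Prop :=
  (∀ x, 0 ≤ p x) ∧ ∑ x, p x = 1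

/-- `γ` is a coupling of `p` and `q`. -/
def IsCoupling [Fintype X] [Fintype Y] (p : X → ℝ) (q : Y → ℝ) (γ : X → Y → ℝ) : Prop :=
  (∀ x y, 0 ≤ γ x y) ∧ (∀ x, ∑ y, γ x y = p x) ∧ (∀ y, ∑ x, γ x y = q y)

/-- `(m, μ)` is a measure Markov chain: each `m x` is a pmf, and `μ` is a fully supported
stationary pmf. -/
def IsMMC [Fintype X] (m : X → X → ℝ) (μ : X → ℝ) : Prop :=
  (∀ x, IsPMF (m x)) ∧ IsPMF μ ∧ (∀ x, 0 < μ x) ∧ (∀ x', ∑ x, m x x' * μ x = μ x')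

/-- `dX` is a metric on the finite type `X`. -/
def IsMetricOn [Fintype X] (dX : X → X → ℝ) : Prop :=
  (∀ x, dX x x = 0) ∧ (∀ x y, dX x y = dX y x) ∧ (∀ x y, x ≠ y → 0 < dX x y) ∧
    (∀ x y z, dX x z ≤ dX x y + dX y z)

/-- The iterated Weisfeiler–Lehman cost `D_k`. -/
noncomputable def costIter [Fintype X] [Fintype Y] (mX : X → X → ℝ) (mY : Y → Y → ℝ)
    (D0 : X → Y → ℝ) : ℕ → X → Y → ℝ
  | 0 => D0
  | k + 1 => fun x y => sInf {r : ℝ | ∃ γ : X → Y → ℝ, IsCoupling (mX x) (mY y) γ ∧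
      r = ∑ x', ∑ y', costIter mX mY D0 k x' y' * γ x' y'}

/-- The Weisfeiler–Lehman distance of depth `k` between two labeled measure Markov chains. -/
noncomputable def dWL {Z : Type*} [PseudoMetricSpace Z] [Fintype X] [Fintype Y]
    (mX : X → X → ℝ) (μX : X → ℝ) (ℓX : X → Z)
    (mY : Y → Y → ℝ) (μY : Y → ℝ) (ℓY : Y → Z) (k : ℕ) : ℝ :=
  sInf {r : ℝ | ∃ γ : X → Y → ℝ, IsCoupling μX μY γ ∧
      r = ∑ x, ∑ y, costIter mX mY (fun x y => dist (ℓX x) (ℓY y)) k x y * γ x y}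

/-- The absolute Weisfeiler–Lehman distance. -/
noncomputable def dWLsup {Z : Type*} [PseudoMetricSpace Z] [Fintype X] [Fintype Y]
    (mX : X → X → ℝ) (μX : X → ℝ) (ℓX : X → Z)
    (mY : Y → Y → ℝ) (μY : Y → ℝ) (ℓY : Y → Z) : ℝ :=
  ⨆ k : ℕ, dWL mX μX ℓX mY μY ℓY k

/-- Isomorphism of labeled measure Markov chains. -/
def LMMCIso {Z : Type*} [Fintype X] [Fintype Y]
    (mX : X → X → ℝ) (μX : X → ℝ) (ℓX : X → Z)
    (mY : Y → Y → ℝ) (μY : Y → ℝ) (ℓY : Y → Z) : Prop :=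
  ∃ ψ : X ≃ Y, (∀ x, ℓY (ψ x) = ℓX x) ∧ (∀ x x', mY (ψ x) (ψ x') = mX x x') ∧
    (∀ x, μY (ψ x) = μX x)

/-- The `q`-Markov kernel of a finite simple graph. -/
noncomputable def graphKernel {V : Type*} [Fintype V] [DecidableEq V] (G : SimpleGraph V) [DecidableRel G.Adj]
    (q : ℝ) (v v' : V) : ℝ :=
  if G.degree v = 0 then (if v' = v then 1 else 0)
  else (if v' = v then q else 0) + (if G.Adj v v' then (1 - q) / (G.degree v : ℝ) else 0)

/-- The stationary degree measure of a finite simple graph. -/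
noncomputable def graphMu {V : Type*} [Fintype V] (G : SimpleGraph V) [DecidableRel G.Adj]
    (v : V) : ℝ :=
  ((max (G.degree v) 1 : ℕ) : ℝ) / ∑ v', ((max (G.degree v') 1 : ℕ) : ℝ)

/-- The type of depth-`k` Weisfeiler–Lehman labels over an initial label set `Z`. -/
def WLType (Z : Type*) : ℕ → Type _
  | 0 => Z
  | k + 1 => WLType Z k × Multiset (WLType Z k)

/-- The Weisfeiler–Lehman label hierarchy `ℓ^k` of a labeled graph. -/
def wlLabel {V Z : Type*} [Fintype V] (G : SimpleGraph V) [DecidableRel G.Adj] (ℓ : V → Z) :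
    (k : ℕ) → V → WLType Z k
  | 0 => ℓ
  | k + 1 => fun v => (wlLabel G ℓ k v, (G.neighborFinset v).val.map (wlLabel G ℓ k))

/-- The multiset `L_k((G, ℓ))` of depth-`k` WL labels of all vertices. -/
def wlMultiset {V Z : Type*} [Fintype V] (G : SimpleGraph V) [DecidableRel G.Adj]
    (ℓ : V → Z) (k : ℕ) : Multiset (WLType Z k) :=
  Finset.univ.val.map (wlLabel G ℓ k)

/-- The WL test distinguishes two labeled graphs. -/
def WLDistinguishes {V₁ V₂ Z : Type*} [Fintype V₁] [Fintype V₂]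
    (G₁ : SimpleGraph V₁) [DecidableRel G₁.Adj] (ℓ₁ : V₁ → Z)
    (G₂ : SimpleGraph V₂) [DecidableRel G₂.Adj] (ℓ₂ : V₂ → Z) : Prop :=
  ∃ k, wlMultiset G₁ ℓ₁ k ≠ wlMultiset G₂ ℓ₂ k

/-- The relabeling `ℓ^g(v) = g(ℓ(v), deg v, |V|)`. -/
def relabel {V Z Z₁ : Type*} [Fintype V] (G : SimpleGraph V) [DecidableRel G.Adj]
    (ℓ : V → Z) (g : Z × ℕ × ℕ → Z₁) : V → Z₁ :=
  fun v => g (ℓ v, G.degree v, Fintype.card V)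

/-- `kpow m k = m^{⊗k}`, the `k`-step Markov kernel (`kpow m 0` is the identity kernel). -/
def kpow [Fintype X] [DecidableEq X] (m : X → X → ℝ) : ℕ → X → X → ℝ
  | 0 => fun x x' => if x' = x then 1 else 0
  | k + 1 => fun x x'' => ∑ x', kpow m k x' x'' * m x x'

/-- The Wasserstein distance between the pushforwards `(ℓX)_# p` and `(ℓY)_# q`, expressed
through couplings of `p` and `q`. -/
noncomputable def wassersteinCost {Z : Type*} [PseudoMetricSpace Z] [Fintype X] [Fintype Y]
    (ℓX : X → Z) (ℓY : Y → Z) (p : X → ℝ) (q : Y → ℝ) : ℝ :=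
  sInf {r : ℝ | ∃ γ : X → Y → ℝ, IsCoupling p q γ ∧
      r = ∑ x, ∑ y, dist (ℓX x) (ℓY y) * γ x y}

/-- The lower bound `d_WLLB^(k)` for the WL distance. -/
noncomputable def dWLLB {Z : Type*} [PseudoMetricSpace Z] [Fintype X] [Fintype Y]
    [DecidableEq X] [DecidableEq Y]
    (mX : X → X → ℝ) (μX : X → ℝ) (ℓX : X → Z)
    (mY : Y → Y → ℝ) (μY : Y → ℝ) (ℓY : Y → Z) (k : ℕ) : ℝ :=
  sInf {r : ℝ | ∃ γ : X → Y → ℝ, IsCoupling μX μY γ ∧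
      r = ∑ x, ∑ y, wassersteinCost ℓX ℓY (kpow mX k x) (kpow mY k y) * γ x y}

/-- Dimension sequence of an MCNN: `mcnnDim d dims 0 = d`, then `dims`. -/
def mcnnDim (d : ℕ) (dims : ℕ → ℕ) : ℕ → ℕ
  | 0 => d
  | i + 1 => dims i

/-- A `k`-layer Markov chain neural network on `ℝ^d`-LMMCs: Lipschitz maps `φ_1, …, φ_{k+1}`
followed by a continuous map `ψ`. -/
structure MCNN (d k : ℕ) where
  dims : ℕ → ℕ
  φ : (i : ℕ) → EuclideanSpace ℝ (Fin (mcnnDim d dims i)) →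
      EuclideanSpace ℝ (Fin (mcnnDim d dims (i + 1)))
  φ_lip : ∀ i, ∃ K : ℝ≥0, LipschitzWith K (φ i)
  ψ : EuclideanSpace ℝ (Fin (mcnnDim d dims (k + 1))) → ℝ
  ψ_cont : Continuous ψ

/-- Labels after `j` layers of an MCNN (the map `F_{φ_j} ∘ ⋯ ∘ F_{φ_1}`). -/
noncomputable def mcnnLabel {X : Type*} [Fintype X] {d k : ℕ} (N : MCNN d k)
    (m : X → X → ℝ) (ℓ : X → EuclideanSpace ℝ (Fin d)) :
    (j : ℕ) → X → EuclideanSpace ℝ (Fin (mcnnDim d N.dims j))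
  | 0 => ℓ
  | j + 1 => fun x => ∑ x', m x x' • N.φ j (mcnnLabel N m ℓ j x')

/-- Evaluation of an MCNN on an `ℝ^d`-LMMC: `ψ ∘ S_{φ_{k+1}} ∘ F_{φ_k} ∘ ⋯ ∘ F_{φ_1}`. -/
noncomputable def mcnnEval {X : Type*} [Fintype X] {d k : ℕ} (N : MCNN d k)
    (m : X → X → ℝ) (μ : X → ℝ) (ℓ : X → EuclideanSpace ℝ (Fin d)) : ℝ :=
  N.ψ (∑ x, μ x • N.φ k (mcnnLabel N m ℓ k x))

/-- `k`-step couplings between the Markov kernels `mX` and `mY` (defined for `k ≥ 1`). -/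
def IsStepCoupling [Fintype X] [Fintype Y] (mX : X → X → ℝ) (mY : Y → Y → ℝ) :
    ℕ → (X → Y → X → Y → ℝ) → Prop
  | 0, _ => False
  | 1, ν => ∀ x y, IsCoupling (mX x) (mY y) (ν x y)
  | k + 2, ν => ∃ νk ν1 : X → Y → X → Y → ℝ,
      IsStepCoupling mX mY (k + 1) νk ∧ (∀ x y, IsCoupling (mX x) (mY y) (ν1 x y)) ∧
      ν = fun x y x' y' => ∑ x'', ∑ y'', νk x'' y'' x' y' * ν1 x y x'' y''

/-- The `k`-distortion `dis^(k)(γ, ν)`. -/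
def disk [Fintype X] [Fintype Y] (dX : X → X → ℝ) (dY : Y → Y → ℝ)
    (γ : X → Y → ℝ) (ν : X → Y → X → Y → ℝ) : ℝ :=
  ∑ x, ∑ y, ∑ x'', ∑ y'', ∑ x', ∑ y',
    |dX x x' - dY y y'| * ν x'' y'' x' y' * γ x'' y'' * γ x y

/-- The `k`-Gromov–Wasserstein distance between Markov chain metric spaces. -/
noncomputable def dGWk [Fintype X] [Fintype Y]
    (mX : X → X → ℝ) (dX : X → X → ℝ) (μX : X → ℝ)
    (mY : Y → Y → ℝ) (dY : Y → Y → ℝ) (μY : Y → ℝ) (k : ℕ) : ℝ :=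
  sInf {r : ℝ | ∃ (γ : X → Y → ℝ) (ν : X → Y → X → Y → ℝ),
      IsCoupling μX μY γ ∧ IsStepCoupling mX mY k ν ∧ r = disk dX dY γ ν}

/-- The absolute Gromov–Wasserstein distance between MCMSs: `sup_{k ≥ 1} d_GW^(k)`. -/
noncomputable def dGWMCMS [Fintype X] [Fintype Y]
    (mX : X → X → ℝ) (dX : X → X → ℝ) (μX : X → ℝ)
    (mY : Y → Y → ℝ) (dY : Y → Y → ℝ) (μY : Y → ℝ) : ℝ :=
  ⨆ k : ℕ, dGWk mX dX μX mY dY μY (k + 1)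

/-- Isomorphism of Markov chain metric spaces. -/
def MCMSIso [Fintype X] [Fintype Y]
    (mX : X → X → ℝ) (dX : X → X → ℝ) (μX : X → ℝ)
    (mY : Y → Y → ℝ) (dY : Y → Y → ℝ) (μY : Y → ℝ) : Prop :=
  ∃ ψ : X ≃ Y, (∀ x x', dY (ψ x) (ψ x') = dX x x') ∧
    (∀ x x', mY (ψ x) (ψ x') = mX x x') ∧ (∀ x, μY (ψ x) = μX x)

/-- The decoupled Gromov–Wasserstein distance between finite metric measure spaces. -/
noncomputable def dGWbi [Fintype X] [Fintype Y]
    (dX : X → X → ℝ) (μX : X → ℝ) (dY : Y → Y → ℝ) (μY : Y → ℝ) : ℝ :=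
  sInf {r : ℝ | ∃ γ γ' : X → Y → ℝ, IsCoupling μX μY γ ∧ IsCoupling μX μY γ' ∧
      r = ∑ x, ∑ y, ∑ x', ∑ y', |dX x x' - dY y y'| * γ' x' y' * γ x y}

/-- `k`-step couplings between the measures `μX` and `μY`
(`k = 0` gives ordinary couplings). -/
def IsMeasureStepCoupling [Fintype X] [Fintype Y] (mX : X → X → ℝ) (mY : Y → Y → ℝ)
    (μX : X → ℝ) (μY : Y → ℝ) : ℕ → (X → Y → ℝ) → Prop
  | 0, γ => IsCoupling μX μY γ
  | k + 1, γk => ∃ (γ : X → Y → ℝ) (ν : X → Y → X → Y → ℝ),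
      IsCoupling μX μY γ ∧ IsStepCoupling mX mY (k + 1) ν ∧
      γk = fun x' y' => ∑ x, ∑ y, ν x y x' y' * γ x y

/-- The WWL label iteration. -/
noncomputable def wwlLabel {V : Type*} [Fintype V] {d : ℕ} (G : SimpleGraph V)
    [DecidableRel G.Adj] (ℓ : V → EuclideanSpace ℝ (Fin d)) :
    ℕ → V → EuclideanSpace ℝ (Fin d)
  | 0 => ℓ
  | i + 1 => fun v => (1 / 2 : ℝ) •
      (wwlLabel G ℓ i v + ((G.degree v : ℝ))⁻¹ • ∑ v' ∈ G.neighborFinset v, wwlLabel G ℓ i v')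

/-- The stacked WWL label `L^k_G = (ℓ^0, …, ℓ^k)`, valued in Euclidean `ℝ^{d(k+1)}`. -/
noncomputable def stackedLabel {V : Type*} [Fintype V] {d : ℕ} (G : SimpleGraph V)
    [DecidableRel G.Adj] (ℓ : V → EuclideanSpace ℝ (Fin d)) (k : ℕ) (v : V) :
    EuclideanSpace ℝ (Fin (k + 1) × Fin d) :=
  WithLp.toLp 2 (fun p : Fin (k + 1) × Fin d => wwlLabel G ℓ (p.1 : ℕ) v p.2)

section Aux

variable [Fintype X] [Fintype Y] (mX : X → X → ℝ) (mY : Y → Y → ℝ) (D0 : X → Y → ℝ)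

lemma prodCoupling {p : X → ℝ} {q : Y → ℝ} (hp : IsPMF p) (hq : IsPMF q) :
    IsCoupling p q (fun x y => p x * q y) := by
  refine ⟨fun x y => mul_nonneg (hp.1 x) (hq.1 y), fun x => ?_, fun y => ?_⟩
  · rw [← Finset.mul_sum, hq.2, mul_one]
  · rw [← Finset.sum_mul, hp.2, one_mul]

lemma coupling_sum_one {p : X → ℝ} {q : Y → ℝ} (hp : IsPMF p) {γ : X → Y → ℝ}
    (hγ : IsCoupling p q γ) : ∑ x, ∑ y, γ x y = 1 := by
  calc ∑ x, ∑ y, γ x y = ∑ x, p x := Finset.sum_congr rfl fun x _ => hγ.2.1 x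
    _ = 1 := hp.2

lemma cost_nonneg (h0 : ∀ x y, 0 ≤ D0 x y) : ∀ k x y, 0 ≤ costIter mX mY D0 k x y := by
  intro k
  induction k with
  | zero => exact h0
  | succ k ih =>
    intro x y
    apply Real.sInf_nonneg
    rintro r ⟨γ, hγ, rfl⟩
    exact Finset.sum_nonneg fun x' _ => Finset.sum_nonneg fun y' _ =>
      mul_nonneg (ih x' y') (hγ.1 x' y')

lemma costSet_bddBelow (h0 : ∀ x y, 0 ≤ D0 x y) (k : ℕ) (x : X) (y : Y) :
    BddBelow {r : ℝ | ∃ γ : X → Y → ℝ, IsCoupling (mX x) (mY y) γ ∧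
      r = ∑ x', ∑ y', costIter mX mY D0 k x' y' * γ x' y'} := by
  refine ⟨0, ?_⟩
  rintro r ⟨γ, hγ, rfl⟩
  exact Finset.sum_nonneg fun x' _ => Finset.sum_nonneg fun y' _ =>
    mul_nonneg (cost_nonneg mX mY D0 h0 k x' y') (hγ.1 x' y')

lemma stepCoupling_nonneg :
    ∀ k (ν : X → Y → X → Y → ℝ), IsStepCoupling mX mY k ν →
      ∀ x y x' y', 0 ≤ ν x y x' y'
  | 0, _, h => h.elim
  | 1, ν, h => fun x y x' y' => (h x y).1 x' y'
  | (k + 2), ν, h => fun x y x' y' => by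
      obtain ⟨νk, ν1, hk, h1, rfl⟩ := h
      exact Finset.sum_nonneg fun x'' _ => Finset.sum_nonneg fun y'' _ =>
        mul_nonneg (stepCoupling_nonneg (k + 1) νk hk x'' y'' x' y') ((h1 x y).1 x'' y'')

lemma swap4 (f : X → Y → X → Y → ℝ) :
    ∑ x', ∑ y', ∑ x, ∑ y, f x' y' x y = ∑ x, ∑ y, ∑ x', ∑ y', f x' y' x y := by
  calc ∑ x', ∑ y', ∑ x, ∑ y, f x' y' x y
      = ∑ x', ∑ x, ∑ y', ∑ y, f x' y' x y :=
        Finset.sum_congr rfl fun x' _ => Finset.sum_comm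
    _ = ∑ x, ∑ x', ∑ y', ∑ y, f x' y' x y := Finset.sum_comm
    _ = ∑ x, ∑ x', ∑ y, ∑ y', f x' y' x y :=
        Finset.sum_congr rfl fun x _ => Finset.sum_congr rfl fun x' _ =>
          Finset.sum_comm
    _ = ∑ x, ∑ y, ∑ x', ∑ y', f x' y' x y :=
        Finset.sum_congr rfl fun x _ => Finset.sum_comm

/-- The 4-index sum swap identity. -/
lemma key_swap (D : X → Y → ℝ) (ν : X → Y → X → Y → ℝ) (γ : X → Y → ℝ) :
    ∑ x', ∑ y', D x' y' * ∑ x, ∑ y, ν x y x' y' * γ x y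
      = ∑ x, ∑ y, (∑ x', ∑ y', D x' y' * ν x y x' y') * γ x y := by
  have L : ∑ x', ∑ y', D x' y' * ∑ x, ∑ y, ν x y x' y' * γ x y
      = ∑ x', ∑ y', ∑ x, ∑ y, D x' y' * ν x y x' y' * γ x y := by
    refine Finset.sum_congr rfl fun x' _ => Finset.sum_congr rfl fun y' _ => ?_
    rw [Finset.mul_sum]
    refine Finset.sum_congr rfl fun x _ => ?_
    rw [Finset.mul_sum]
    exact Finset.sum_congr rfl fun y _ => by ring
  have R : ∑ x, ∑ y, (∑ x', ∑ y', D x' y' * ν x y x' y') * γ x y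
      = ∑ x, ∑ y, ∑ x', ∑ y', D x' y' * ν x y x' y' * γ x y := by
    refine Finset.sum_congr rfl fun x _ => Finset.sum_congr rfl fun y _ => ?_
    rw [Finset.sum_mul]
    refine Finset.sum_congr rfl fun x' _ => ?_
    rw [Finset.sum_mul]
  rw [L, R]
  exact swap4 fun x' y' x y => D x' y' * ν x y x' y' * γ x y

lemma cost_le_step (h0 : ∀ x y, 0 ≤ D0 x y) :
    ∀ k (ν : X → Y → X → Y → ℝ), IsStepCoupling mX mY k ν → ∀ x y,
      costIter mX mY D0 k x y ≤ ∑ x', ∑ y', D0 x' y' * ν x y x' y'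
  | 0, _, h => h.elim
  | 1, ν, h => fun x y =>
      csInf_le (costSet_bddBelow mX mY D0 h0 0 x y) ⟨ν x y, h x y, rfl⟩
  | (k + 2), ν, h => fun x y => by
      obtain ⟨νk, ν1, hk, h1, rfl⟩ := h
      have hswap := key_swap D0 νk (ν1 x y)
      calc costIter mX mY D0 (k + 2) x y
          ≤ ∑ x'', ∑ y'', costIter mX mY D0 (k + 1) x'' y'' * ν1 x y x'' y'' :=
            csInf_le (costSet_bddBelow mX mY D0 h0 (k + 1) x y) ⟨ν1 x y, h1 x y, rfl⟩
        _ ≤ ∑ x'', ∑ y'', (∑ x', ∑ y', D0 x' y' * νk x'' y'' x' y') * ν1 x y x'' y'' := by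
            refine Finset.sum_le_sum fun x'' _ => Finset.sum_le_sum fun y'' _ =>
              mul_le_mul_of_nonneg_right
                (cost_le_step h0 (k + 1) νk hk x'' y'') ((h1 x y).1 x'' y'')
        _ = ∑ x', ∑ y', D0 x' y' * ∑ x'', ∑ y'', νk x'' y'' x' y' * ν1 x y x'' y'' := by
            rw [hswap]

lemma exists_good_step (h0 : ∀ x y, 0 ≤ D0 x y) (hmX : ∀ x, IsPMF (mX x))
    (hmY : ∀ y, IsPMF (mY y)) :
    ∀ k, ∀ ε : ℝ, 0 < ε → ∃ ν : X → Y → X → Y → ℝ,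
      IsStepCoupling mX mY (k + 1) ν ∧ ∀ x y,
        ∑ x', ∑ y', D0 x' y' * ν x y x' y' ≤ costIter mX mY D0 (k + 1) x y + ε := by
  intro k
  induction k with
  | zero =>
    intro ε hε
    have h : ∀ x y, ∃ γ : X → Y → ℝ, IsCoupling (mX x) (mY y) γ ∧
        ∑ x', ∑ y', costIter mX mY D0 0 x' y' * γ x' y'
          ≤ costIter mX mY D0 1 x y + ε := by
      intro x y
      obtain ⟨r, hr, hlt⟩ := Real.lt_sInf_add_pos
        (⟨_, ⟨_, prodCoupling (hmX x) (hmY y), rfl⟩⟩ :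
          Set.Nonempty {r : ℝ | ∃ γ : X → Y → ℝ, IsCoupling (mX x) (mY y) γ ∧
            r = ∑ x', ∑ y', costIter mX mY D0 0 x' y' * γ x' y'}) hε
      obtain ⟨γ, hγ, rfl⟩ := hr
      exact ⟨γ, hγ, le_of_lt hlt⟩
    choose ν hν hle using h
    exact ⟨ν, hν, hle⟩
  | succ k ih =>
    intro ε hε
    obtain ⟨νk, hνk, hνkle⟩ := ih (ε / 2) (by positivity)
    have h : ∀ x y, ∃ γ1 : X → Y → ℝ, IsCoupling (mX x) (mY y) γ1 ∧
        ∑ x'', ∑ y'', costIter mX mY D0 (k + 1) x'' y'' * γ1 x'' y''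
          ≤ costIter mX mY D0 (k + 2) x y + ε / 2 := by
      intro x y
      obtain ⟨r, hr, hlt⟩ := Real.lt_sInf_add_pos
        (⟨_, ⟨_, prodCoupling (hmX x) (hmY y), rfl⟩⟩ :
          Set.Nonempty {r : ℝ | ∃ γ : X → Y → ℝ, IsCoupling (mX x) (mY y) γ ∧
            r = ∑ x'', ∑ y'', costIter mX mY D0 (k + 1) x'' y'' * γ x'' y''}) (half_pos hε)
      obtain ⟨γ, hγ, rfl⟩ := hr
      refine ⟨γ, hγ, hlt.le.trans (le_of_eq ?_)⟩
      simp only [costIter]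
    choose ν1 hν1 hν1le using h
    refine ⟨fun x y x' y' => ∑ x'', ∑ y'', νk x'' y'' x' y' * ν1 x y x'' y'',
      ⟨νk, ν1, hνk, hν1, rfl⟩, fun x y => ?_⟩
    rw [key_swap]
    calc ∑ x'', ∑ y'', (∑ x', ∑ y', D0 x' y' * νk x'' y'' x' y') * ν1 x y x'' y''
        ≤ ∑ x'', ∑ y'', (costIter mX mY D0 (k + 1) x'' y'' + ε / 2) * ν1 x y x'' y'' :=
          Finset.sum_le_sum fun x'' _ => Finset.sum_le_sum fun y'' _ =>
            mul_le_mul_of_nonneg_right (hνkle x'' y'') ((hν1 x y).1 x'' y'')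
      _ = (∑ x'', ∑ y'', costIter mX mY D0 (k + 1) x'' y'' * ν1 x y x'' y'')
            + ε / 2 * ∑ x'', ∑ y'', ν1 x y x'' y'' := by
          rw [Finset.mul_sum, ← Finset.sum_add_distrib]
          refine Finset.sum_congr rfl fun x'' _ => ?_
          rw [Finset.mul_sum, ← Finset.sum_add_distrib]
          exact Finset.sum_congr rfl fun y'' _ => by ring
      _ = (∑ x'', ∑ y'', costIter mX mY D0 (k + 1) x'' y'' * ν1 x y x'' y'') + ε / 2 := by
          rw [coupling_sum_one (hmX x) (hν1 x y), mul_one]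
      _ ≤ costIter mX mY D0 (k + 2) x y + ε / 2 + ε / 2 :=
          add_le_add_left (hν1le x y) _
      _ = costIter mX mY D0 (k + 2) x y + ε := by ring

end Aux

theorem dWL_eq_step_coupling_inf {X Y Z : Type*} [Fintype X] [Fintype Y] [MetricSpace Z]
    (mX : X → X → ℝ) (μX : X → ℝ) (ℓX : X → Z)
    (mY : Y → Y → ℝ) (μY : Y → ℝ) (ℓY : Y → Z)
    (hX : IsMMC mX μX) (hY : IsMMC mY μY) (k : ℕ) :
    dWL mX μX ℓX mY μY ℓY k =
      sInf {r : ℝ | ∃ γk : X → Y → ℝ, IsMeasureStepCoupling mX mY μX μY k γk ∧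
        r = ∑ x, ∑ y, dist (ℓX x) (ℓY y) * γk x y} := by
  set D0 : X → Y → ℝ := fun x y => dist (ℓX x) (ℓY y) with hD0
  have h0 : ∀ x y, 0 ≤ D0 x y := fun x y => dist_nonneg
  cases k with
  | zero => rfl
  | succ j =>
    rw [dWL]
    have bddL : BddBelow {r : ℝ | ∃ γ : X → Y → ℝ, IsCoupling μX μY γ ∧
        r = ∑ x, ∑ y, costIter mX mY D0 (j + 1) x y * γ x y} := by
      refine ⟨0, ?_⟩
      rintro r ⟨γ, hγ, rfl⟩
      exact Finset.sum_nonneg fun x _ => Finset.sum_nonneg fun y _ =>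
        mul_nonneg (cost_nonneg mX mY D0 h0 (j + 1) x y) (hγ.1 x y)
    have bddR : BddBelow {r : ℝ | ∃ γk : X → Y → ℝ,
        IsMeasureStepCoupling mX mY μX μY (j + 1) γk ∧
        r = ∑ x, ∑ y, D0 x y * γk x y} := by
      refine ⟨0, ?_⟩
      rintro r ⟨γk, ⟨γ, ν, hγ, hν, rfl⟩, rfl⟩
      refine Finset.sum_nonneg fun x' _ => Finset.sum_nonneg fun y' _ =>
        mul_nonneg (h0 x' y') ?_
      exact Finset.sum_nonneg fun x _ => Finset.sum_nonneg fun y _ =>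
        mul_nonneg (stepCoupling_nonneg mX mY (j + 1) ν hν x y x' y') (hγ.1 x y)
    apply le_antisymm
    · -- sInf LHS ≤ sInf RHS
      apply le_csInf
      · obtain ⟨ν, hν, -⟩ := exists_good_step mX mY D0 h0 hX.1 hY.1 j 1 one_pos
        exact ⟨_, ⟨_, ⟨fun x y => μX x * μY y, ν,
          prodCoupling hX.2.1 hY.2.1, hν, rfl⟩, rfl⟩⟩
      · rintro r ⟨γk, ⟨γ, ν, hγ, hν, rfl⟩, rfl⟩
        refine le_trans (csInf_le bddL ⟨γ, hγ, rfl⟩) ?_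
        rw [key_swap]
        exact Finset.sum_le_sum fun x _ => Finset.sum_le_sum fun y _ =>
          mul_le_mul_of_nonneg_right (cost_le_step mX mY D0 h0 (j + 1) ν hν x y)
            (hγ.1 x y)
    · -- sInf RHS ≤ sInf LHS
      apply le_csInf
      · exact ⟨_, _, prodCoupling hX.2.1 hY.2.1, rfl⟩
      · rintro r ⟨γ, hγ, rfl⟩
        apply le_of_forall_pos_le_add
        intro ε hε
        obtain ⟨ν, hν, hle⟩ := exists_good_step mX mY D0 h0 hX.1 hY.1 j ε hε
        have mem : (∑ x', ∑ y', D0 x' y' * ∑ x, ∑ y, ν x y x' y' * γ x y) ∈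
            {r : ℝ | ∃ γk : X → Y → ℝ,
              IsMeasureStepCoupling mX mY μX μY (j + 1) γk ∧
              r = ∑ x, ∑ y, D0 x y * γk x y} :=
          ⟨_, ⟨γ, ν, hγ, hν, rfl⟩, rfl⟩
        refine le_trans (csInf_le bddR mem) ?_
        rw [key_swap]
        calc ∑ x, ∑ y, (∑ x', ∑ y', D0 x' y' * ν x y x' y') * γ x y
            ≤ ∑ x, ∑ y, (costIter mX mY D0 (j + 1) x y + ε) * γ x y :=
              Finset.sum_le_sum fun x _ => Finset.sum_le_sum fun y _ =>
                mul_le_mul_of_nonneg_right (hle x y) (hγ.1 x y)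
          _ = (∑ x, ∑ y, costIter mX mY D0 (j + 1) x y * γ x y)
                + ε * ∑ x, ∑ y, γ x y := by
              rw [Finset.mul_sum, ← Finset.sum_add_distrib]
              refine Finset.sum_congr rfl fun x _ => ?_
              rw [Finset.mul_sum, ← Finset.sum_add_distrib]
              exact Finset.sum_congr rfl fun y _ => by ring
          _ = (∑ x, ∑ y, costIter mX mY D0 (j + 1) x y * γ x y) + ε := by
              rw [coupling_sum_one hX.2.1 hγ, mul_one]

end WLGW
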